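/- For all natural numbers m and n, the Gram coefficients satisfy the commutation relation √(n+1)·a_{m, n+1} + √n·a_{m, n−1} = √(m+1)·a_{m+1, n} + √m·a_{m−1, n}, where any term carrying the factor √0 (i.e., involving an index −1) is interpreted as 0. (This is the entrywise content of the identity A·B = B·A between the infinite Gram matrix A = (a_{m,n}) and the infinite symmetric advection matrix B with entries b_{n,m} = √T·( √((m+1)/2)·δ_{m+1,n} + √(m/2)·δ_{m−1,n} ).) -/

import Mathlib

open Real MeasureTheory Matrix Filter

/-- Physicists' Hermite polynomials: H_0 = 1, H_1 = 2x, H_{n+1} = 2x H_n - 2n H_{n-1}. -/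
noncomputable def hermiteH : ℕ → ℝ → ℝ
  | 0, _ => 1
  | 1, x => 2 * x
  | (n + 2), x => 2 * x * hermiteH (n + 1) x - 2 * (n + 1) * hermiteH n x

/-- Asymmetric Hermite basis function ψ_m. -/
noncomputable def psi (T : ℝ) (m : ℕ) (v : ℝ) : ℝ :=
  Real.exp (-v ^ 2 / T) * T ^ (-(1 : ℝ) / 2) *
    ((2 : ℝ) ^ m * (Nat.factorial m : ℝ) * Real.sqrt π) ^ (-(1 : ℝ) / 2) *
    hermiteH m (v / Real.sqrt T)

/-- Gram coefficient a_{m,n} = ∫ ψ_m ψ_n. -/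
noncomputable def gramA (T : ℝ) (m n : ℕ) : ℝ := ∫ v : ℝ, psi T m v * psi T n v

/-! ### Auxiliary lemmas -/

noncomputable def cst (m : ℕ) : ℝ := (2 : ℝ) ^ m * (Nat.factorial m : ℝ) * Real.sqrt π

lemma cst_pos (m : ℕ) : 0 < cst m := by
  have h1 : (0:ℝ) < π := Real.pi_pos
  have h2 : 0 < Nat.factorial m := Nat.factorial_pos m
  unfold cst; positivity

lemma rpow_neg_half (a : ℝ) (ha : 0 < a) : a ^ (-(1 : ℝ) / 2) = (Real.sqrt a)⁻¹ := by
  rw [neg_div, Real.rpow_neg ha.le, Real.sqrt_eq_rpow]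

lemma cst_succ (m : ℕ) : cst (m + 1) = 2 * ((m : ℝ) + 1) * cst m := by
  unfold cst
  rw [Nat.factorial_succ]
  push_cast
  ring

lemma sqrt_cst_succ (m : ℕ) :
    Real.sqrt (cst (m + 1)) = Real.sqrt 2 * Real.sqrt ((m : ℝ) + 1) * Real.sqrt (cst m) := by
  rw [cst_succ, Real.sqrt_mul (by positivity), Real.sqrt_mul (by norm_num)]

lemma key_coeff (k : ℕ) (x : ℝ) :
    Real.sqrt ((k : ℝ) + 1 + 1) * (Real.sqrt (cst (k + 2)))⁻¹ * hermiteH (k + 2) x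
      + Real.sqrt ((k : ℝ) + 1) * (Real.sqrt (cst k))⁻¹ * hermiteH k x
    = Real.sqrt 2 * x * (Real.sqrt (cst (k + 1)))⁻¹ * hermiteH (k + 1) x := by
  have hH : hermiteH (k + 2) x
      = 2 * x * hermiteH (k + 1) x - 2 * ((k : ℝ) + 1) * hermiteH k x := by
    simp [hermiteH]
  have h2 : Real.sqrt (cst (k + 2))
      = Real.sqrt 2 * Real.sqrt ((k : ℝ) + 1 + 1) * (Real.sqrt 2 * Real.sqrt ((k : ℝ) + 1)
        * Real.sqrt (cst k)) := by
    rw [sqrt_cst_succ, sqrt_cst_succ]; push_cast; ring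
  rw [hH, h2, sqrt_cst_succ]
  have hs : (0:ℝ) < Real.sqrt (cst k) := Real.sqrt_pos.mpr (cst_pos k)
  have h1 : (0:ℝ) < Real.sqrt ((k : ℝ) + 1) := Real.sqrt_pos.mpr (by positivity)
  have h2' : (0:ℝ) < Real.sqrt ((k : ℝ) + 1 + 1) := Real.sqrt_pos.mpr (by positivity)
  have hr2 : (0:ℝ) < Real.sqrt 2 := Real.sqrt_pos.mpr (by norm_num)
  have e1 : Real.sqrt ((k : ℝ) + 1) * Real.sqrt ((k : ℝ) + 1) = (k : ℝ) + 1 :=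
    Real.mul_self_sqrt (by positivity)
  have e2 : Real.sqrt ((k : ℝ) + 1 + 1) * Real.sqrt ((k : ℝ) + 1 + 1) = (k : ℝ) + 1 + 1 :=
    Real.mul_self_sqrt (by positivity)
  have e3 : Real.sqrt 2 * Real.sqrt 2 = 2 := Real.mul_self_sqrt (by norm_num)
  field_simp
  linear_combination (Real.sqrt 2 ^ 3 * Real.sqrt ((k:ℝ)+1) * Real.sqrt ((k:ℝ)+1+1)
      * Real.sqrt (cst k) ^ 2 * hermiteH k x) * e1
    + (Real.sqrt 2 * Real.sqrt ((k:ℝ)+1) * Real.sqrt ((k:ℝ)+1+1) * Real.sqrt (cst k) ^ 2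
      * ((k:ℝ)+1) * hermiteH k x) * e3
    - (Real.sqrt ((k:ℝ)+1+1) * x * hermiteH (k+1) x * Real.sqrt (cst k) ^ 2
      * Real.sqrt ((k:ℝ)+1) * Real.sqrt 2) * e3
    + (x * hermiteH (k+1) x * (Real.sqrt 2 * Real.sqrt ((k:ℝ)+1) * Real.sqrt ((k:ℝ)+1+1)
        * Real.sqrt (cst k) ^ 2 - 1) + hermiteH k x * ((k:ℝ)+1) * (1 - Real.sqrt 2
        * Real.sqrt ((k:ℝ)+1) * Real.sqrt ((k:ℝ)+1+1) * Real.sqrt (cst k) ^ 2)) * e3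
    + (hermiteH k x * Real.sqrt 2 ^ 2 * (1 - Real.sqrt 2 * Real.sqrt ((k:ℝ)+1)
        * Real.sqrt ((k:ℝ)+1+1) * Real.sqrt (cst k) ^ 2)) * e1

lemma psi_eq (T : ℝ) (m : ℕ) (v : ℝ) :
    psi T m v = Real.exp (-v ^ 2 / T) * T ^ (-(1 : ℝ) / 2) * (Real.sqrt (cst m))⁻¹ *
      hermiteH m (v / Real.sqrt T) := by
  rw [psi, ← cst, rpow_neg_half _ (cst_pos m)]

lemma psi_rec (T : ℝ) (hT : 0 < T) (n : ℕ) (v : ℝ) :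
    Real.sqrt ((n : ℝ) + 1) * psi T (n + 1) v + Real.sqrt (n : ℝ) * psi T (n - 1) v
      = Real.sqrt 2 / Real.sqrt T * v * psi T n v := by
  have hsT : (0:ℝ) < Real.sqrt T := Real.sqrt_pos.mpr hT
  have e3 : Real.sqrt 2 * Real.sqrt 2 = 2 := Real.mul_self_sqrt (by norm_num)
  cases n with
  | zero =>
      simp only [Nat.cast_zero, Real.sqrt_zero, zero_mul, add_zero, zero_add, Nat.zero_eq]
      norm_num
      rw [psi_eq, psi_eq]
      have h1 : Real.sqrt (cst 1) = Real.sqrt 2 * Real.sqrt (cst 0) := by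
        have := sqrt_cst_succ 0
        simpa using this
      rw [h1]
      have hH1 : hermiteH 1 (v / Real.sqrt T) = 2 * (v / Real.sqrt T) := rfl
      have hH0 : hermiteH 0 (v / Real.sqrt T) = 1 := rfl
      rw [hH1, hH0]
      have hs0 : (0:ℝ) < Real.sqrt (cst 0) := Real.sqrt_pos.mpr (cst_pos 0)
      field_simp
      linear_combination (-v) * e3
  | succ k =>
      rw [Nat.succ_sub_one]
      rw [psi_eq, psi_eq, psi_eq]
      push_cast
      have key := key_coeff k (v / Real.sqrt T)
      have hv : Real.sqrt 2 / Real.sqrt T * v = Real.sqrt 2 * (v / Real.sqrt T) := by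
        field_simp
      rw [hv]
      set E := Real.exp (-v ^ 2 / T) * T ^ (-(1:ℝ)/2) with hE
      calc Real.sqrt ((k:ℝ) + 1 + 1) * (E * (Real.sqrt (cst (k+1+1)))⁻¹ * hermiteH (k+1+1) (v / Real.sqrt T))
            + Real.sqrt ((k:ℝ) + 1) * (E * (Real.sqrt (cst k))⁻¹ * hermiteH k (v / Real.sqrt T))
          = E * (Real.sqrt ((k:ℝ) + 1 + 1) * (Real.sqrt (cst (k+2)))⁻¹ * hermiteH (k+2) (v / Real.sqrt T)
            + Real.sqrt ((k:ℝ) + 1) * (Real.sqrt (cst k))⁻¹ * hermiteH k (v / Real.sqrt T)) := by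
            ring_nf
        _ = E * (Real.sqrt 2 * (v / Real.sqrt T) * (Real.sqrt (cst (k+1)))⁻¹ * hermiteH (k+1) (v / Real.sqrt T)) := by
            rw [key]
        _ = Real.sqrt 2 * (v / Real.sqrt T) * (E * (Real.sqrt (cst (k+1)))⁻¹ * hermiteH (k+1) (v / Real.sqrt T)) := by
            ring

lemma herm_poly : ∀ n : ℕ, (∃ p : Polynomial ℝ, ∀ x, hermiteH n x = p.eval x) ∧
    (∃ p : Polynomial ℝ, ∀ x, hermiteH (n + 1) x = p.eval x) := by
  intro n
  induction n with
  | zero =>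
      refine ⟨⟨1, fun x => by simp [hermiteH]⟩, ⟨2 * Polynomial.X, fun x => by
        simp [hermiteH]⟩⟩
  | succ k ih =>
      obtain ⟨⟨p, hp⟩, ⟨q, hq⟩⟩ := ih
      refine ⟨⟨q, hq⟩, ⟨2 * Polynomial.X * q - 2 * ((k : ℝ) + 1) • p, fun x => ?_⟩⟩
      have : hermiteH (k + 2) x = 2 * x * hermiteH (k + 1) x - 2 * ((k : ℝ) + 1) * hermiteH k x := by
        simp [hermiteH]
      rw [this, hp, hq]
      simp [Polynomial.eval_smul]
      ring

lemma pow_mul_gauss_bound {c : ℝ} (hc : 0 < c) (k : ℕ) (x : ℝ) :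
    |x| ^ k * Real.exp (-c * x ^ 2) ≤ 1 + (k.factorial : ℝ) / c ^ k := by
  have hE : (0:ℝ) < Real.exp (c * x ^ 2) := Real.exp_pos _
  have hinv : Real.exp (-c * x ^ 2) = (Real.exp (c * x ^ 2))⁻¹ := by
    rw [← Real.exp_neg]; ring_nf
  have h1 : |x| ^ k ≤ 1 + (x ^ 2) ^ k := by
    have ht : (0:ℝ) ≤ |x| ^ k := pow_nonneg (abs_nonneg x) k
    have h : (x ^ 2) ^ k = (|x| ^ k) ^ 2 := by rw [← sq_abs]; ring
    nlinarith
  have h2 : (c * x ^ 2) ^ k / (k.factorial : ℝ) ≤ Real.exp (c * x ^ 2) :=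
    Real.pow_div_factorial_le_exp _ (by positivity) k
  have hfac : (0:ℝ) < (k.factorial : ℝ) := by exact_mod_cast k.factorial_pos
  have h3 : (x ^ 2) ^ k ≤ (k.factorial : ℝ) / c ^ k * Real.exp (c * x ^ 2) := by
    rw [div_mul_eq_mul_div, le_div_iff₀ (by positivity)]
    calc (x ^ 2) ^ k * c ^ k = (c * x ^ 2) ^ k := by rw [mul_pow]; ring
      _ ≤ (k.factorial : ℝ) * Real.exp (c * x ^ 2) := by
          rw [div_le_iff₀ hfac] at h2; linarith
  have hexp1 : Real.exp (-c * x ^ 2) ≤ 1 := by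
    rw [Real.exp_le_one_iff]; nlinarith [sq_nonneg x]
  have hmul : Real.exp (c * x ^ 2) * Real.exp (-c * x ^ 2) = 1 := by
    rw [← Real.exp_add]; simp
  have h4 : (x ^ 2) ^ k * Real.exp (-c * x ^ 2) ≤ (k.factorial : ℝ) / c ^ k := by
    calc (x ^ 2) ^ k * Real.exp (-c * x ^ 2)
        ≤ (k.factorial : ℝ) / c ^ k * Real.exp (c * x ^ 2) * Real.exp (-c * x ^ 2) :=
          mul_le_mul_of_nonneg_right h3 (Real.exp_pos _).le
      _ = (k.factorial : ℝ) / c ^ k := by rw [mul_assoc, hmul, mul_one]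
  calc |x| ^ k * Real.exp (-c * x ^ 2) ≤ (1 + (x ^ 2) ^ k) * Real.exp (-c * x ^ 2) := by
        apply mul_le_mul_of_nonneg_right h1 (Real.exp_pos _).le
    _ = Real.exp (-c * x ^ 2) + (x ^ 2) ^ k * Real.exp (-c * x ^ 2) := by ring
    _ ≤ 1 + (k.factorial : ℝ) / c ^ k := by linarith

lemma integrable_pow_mul_gauss {b : ℝ} (hb : 0 < b) (k : ℕ) :
    MeasureTheory.Integrable fun x : ℝ => x ^ k * Real.exp (-b * x ^ 2) := by
  have hb2 : 0 < b / 2 := by linarith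
  apply MeasureTheory.Integrable.mono'
    ((integrable_exp_neg_mul_sq hb2).const_mul (1 + (k.factorial : ℝ) / (b / 2) ^ k))
  · exact Continuous.aestronglyMeasurable (by fun_prop)
  · filter_upwards with x
    have : -b * x ^ 2 = -(b / 2) * x ^ 2 + -(b / 2) * x ^ 2 := by ring
    rw [Real.norm_eq_abs, abs_mul, abs_of_nonneg (Real.exp_pos _).le, abs_pow, this,
      Real.exp_add, ← mul_assoc]
    apply mul_le_mul_of_nonneg_right (pow_mul_gauss_bound hb2 k x) (Real.exp_pos _).le

lemma integrable_psi_mul (T : ℝ) (hT : 0 < T) (m n : ℕ) :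
    MeasureTheory.Integrable fun v : ℝ => psi T m v * psi T n v := by
  obtain ⟨p, hp⟩ := (herm_poly m).1
  obtain ⟨q, hq⟩ := (herm_poly n).1
  set K : ℝ := T ^ (-(1:ℝ)/2) * T ^ (-(1:ℝ)/2) * (Real.sqrt (cst m))⁻¹ * (Real.sqrt (cst n))⁻¹
    with hK
  set r : Polynomial ℝ := p * q with hr
  set N : ℕ := r.natDegree + 1 with hN
  have hb : (0:ℝ) < 2 / T := by positivity
  have hsT : (0:ℝ) < Real.sqrt T := Real.sqrt_pos.mpr hT
  have hF : MeasureTheory.Integrable fun v : ℝ =>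
      ∑ i ∈ Finset.range N, (K * r.coeff i * ((Real.sqrt T)⁻¹) ^ i) *
        (v ^ i * Real.exp (-(2 / T) * v ^ 2)) := by
    apply MeasureTheory.integrable_finset_sum
    intro i _
    exact (integrable_pow_mul_gauss hb i).const_mul _
  apply hF.congr
  filter_upwards with v
  have hexp : Real.exp (-v ^ 2 / T) * Real.exp (-v ^ 2 / T) = Real.exp (-(2 / T) * v ^ 2) := by
    rw [← Real.exp_add]
    congr 1
    field_simp
    ring
  have heval : r.eval (v / Real.sqrt T)
      = ∑ i ∈ Finset.range N, r.coeff i * (v / Real.sqrt T) ^ i := by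
    rw [hN]
    exact Polynomial.eval_eq_sum_range _
  have hpsi : psi T m v * psi T n v
      = K * r.eval (v / Real.sqrt T) * Real.exp (-(2 / T) * v ^ 2) := by
    rw [psi_eq, psi_eq, hK, hr, Polynomial.eval_mul, ← hp, ← hq, ← hexp]
    ring
  rw [hpsi, heval, Finset.mul_sum, Finset.sum_mul]
  apply Finset.sum_congr rfl
  intro i _
  rw [div_pow, div_eq_mul_inv]
  ring

theorem gramA_commutation_relation' (T : ℝ) (hT : 0 < T) (m n : ℕ) :
    Real.sqrt ((n : ℝ) + 1) * (∫ v : ℝ, psi T m v * psi T (n+1) v) +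
        Real.sqrt (n : ℝ) * (∫ v : ℝ, psi T m v * psi T (n-1) v) =
      Real.sqrt ((m : ℝ) + 1) * (∫ v : ℝ, psi T (m+1) v * psi T n v) +
        Real.sqrt (m : ℝ) * (∫ v : ℝ, psi T (m-1) v * psi T n v) := by
  have key : ∀ v : ℝ,
      Real.sqrt ((n : ℝ) + 1) * (psi T m v * psi T (n+1) v) +
        Real.sqrt (n : ℝ) * (psi T m v * psi T (n-1) v)
      = Real.sqrt ((m : ℝ) + 1) * (psi T (m+1) v * psi T n v) +
        Real.sqrt (m : ℝ) * (psi T (m-1) v * psi T n v) := by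
    intro v
    have h1 := psi_rec T hT n v
    have h2 := psi_rec T hT m v
    calc Real.sqrt ((n : ℝ) + 1) * (psi T m v * psi T (n+1) v) +
          Real.sqrt (n : ℝ) * (psi T m v * psi T (n-1) v)
        = psi T m v * (Real.sqrt ((n : ℝ) + 1) * psi T (n+1) v +
            Real.sqrt (n : ℝ) * psi T (n-1) v) := by ring
      _ = psi T m v * (Real.sqrt 2 / Real.sqrt T * v * psi T n v) := by rw [h1]
      _ = (Real.sqrt 2 / Real.sqrt T * v * psi T m v) * psi T n v := by ring
      _ = (Real.sqrt ((m : ℝ) + 1) * psi T (m+1) v +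
            Real.sqrt (m : ℝ) * psi T (m-1) v) * psi T n v := by rw [h2]
      _ = _ := by ring
  rw [← MeasureTheory.integral_const_mul, ← MeasureTheory.integral_const_mul,
    ← MeasureTheory.integral_const_mul, ← MeasureTheory.integral_const_mul,
    ← MeasureTheory.integral_add ((integrable_psi_mul T hT m (n+1)).const_mul _)
      ((integrable_psi_mul T hT m (n-1)).const_mul _),
    ← MeasureTheory.integral_add ((integrable_psi_mul T hT (m+1) n).const_mul _)
      ((integrable_psi_mul T hT (m-1) n).const_mul _)]
  exact MeasureTheory.integral_congr_ae (Filter.Eventually.of_forall key)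

theorem gramA_commutation_relation (T : ℝ) (hT : 0 < T) (m n : ℕ) :
    Real.sqrt ((n : ℝ) + 1) * gramA T m (n + 1) +
        Real.sqrt (n : ℝ) * gramA T m (n - 1) =
      Real.sqrt ((m : ℝ) + 1) * gramA T (m + 1) n +
        Real.sqrt (m : ℝ) * gramA T (m - 1) n := by
  unfold gramA
  exact gramA_commutation_relation' T hT m n
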